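/- arXiv:1712.02324 — 7 statements merged into one kernel-verified Lean document; each statement's English description precedes it below -/
import Mathlib

section
/- In the set-graph G_{A^{(n)}} with n ≥ 1, the clique number is 2^{n-1}, i.e., the largest complete subgraph is K_{2^{n-1}}. -/
/-- The set-graph: vertices are nonempty subsets of an `n`-element set,
two distinct subsets adjacent iff they intersect. -/
def setGraph (n : ℕ) : SimpleGraph {s : Finset (Fin n) // s.Nonempty} where
  Adj a b := a ≠ b ∧ (a.1 ∩ b.1).Nonempty
  symm := by
    constructor
    intro a b h
    exact ⟨h.1.symm, by rw [Finset.inter_comm]; exact h.2⟩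
  loopless := by constructor; intro a h; exact h.1 rfl

theorem setGraph_cliqueNumber (n : ℕ) (hn : 1 ≤ n) :
    IsGreatest {k : ℕ | ∃ S : Finset {s : Finset (Fin n) // s.Nonempty},
      (setGraph n).IsNClique k S} (2 ^ (n - 1)) := by
  have z : Fin n := ⟨0, hn⟩
  constructor
  · -- membership: all subsets containing z
    set F : Finset (Finset (Fin n)) :=
      ((Finset.univ.erase z).powerset).image (insert z) with hF
    have hmemz : ∀ s ∈ F, z ∈ s := by
      intro s hs
      rw [hF, Finset.mem_image] at hs
      obtain ⟨t, _, rfl⟩ := hs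
      exact Finset.mem_insert_self _ _
    refine ⟨F.subtype (·.Nonempty), ?_, ?_⟩
    · intro a ha b hb hab
      rw [Finset.mem_coe, Finset.mem_subtype] at ha hb
      exact ⟨hab, ⟨z, Finset.mem_inter.2 ⟨hmemz _ ha, hmemz _ hb⟩⟩⟩
    · rw [Finset.card_subtype]
      have hfil : F.filter (·.Nonempty) = F := by
        apply Finset.filter_true_of_mem
        intro s hs; exact ⟨z, hmemz _ hs⟩
      rw [hfil, hF]
      rw [Finset.card_image_of_injOn]
      · rw [Finset.card_powerset, Finset.card_erase_of_mem (Finset.mem_univ z),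
          Finset.card_univ, Fintype.card_fin]
      · intro a ha b hb hab
        rw [Finset.mem_coe, Finset.mem_powerset] at ha hb
        have haz : z ∉ a := fun h => (Finset.mem_erase.1 (ha h)).1 rfl
        have hbz : z ∉ b := fun h => (Finset.mem_erase.1 (hb h)).1 rfl
        have := congrArg (Finset.erase · z) hab
        simpa [Finset.erase_insert haz, Finset.erase_insert hbz] using this
  · -- upper bound
    rintro k ⟨S, hS⟩
    have hint : (↑(S.image Subtype.val) : Set (Finset (Fin n))).Intersecting := by
      intro a ha b hb hdis
      rw [Finset.coe_image, Set.mem_image] at ha hb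
      obtain ⟨⟨a, hane⟩, haS, rfl⟩ := ha
      obtain ⟨⟨b, hbne⟩, hbS, rfl⟩ := hb
      rw [Finset.disjoint_iff_inter_eq_empty] at hdis
      by_cases hab : a = b
      · subst hab
        simp only [Finset.inter_self] at hdis
        exact hane.ne_empty hdis
      · have hadj := hS.1 haS hbS (by simp [hab])
        exact hadj.2.ne_empty hdis
    have hcard := hint.card_le
    rw [Finset.card_image_of_injective _ Subtype.val_injective, hS.2] at hcard
    have : Fintype.card (Finset (Fin n)) = 2 ^ n := by simp
    rw [this] at hcard
    have hexp : 2 ^ n = 2 * 2 ^ (n - 1) := by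
      conv_lhs => rw [show n = (n - 1) + 1 from (Nat.succ_pred_eq_of_pos hn).symm]
      ring
    omega
end

section
/- The chromatic number of the set-graph G_{A^{(n)}}, n ≥ 1, equals 2^{n-1}. -/
theorem card_mem_aux (n : ℕ) (a : Fin n) :
    Fintype.card {s : Finset (Fin n) // a ∈ s} = 2 ^ (n - 1) := by
  have e : {s : Finset (Fin n) // a ∈ s} ≃ {s : Finset (Fin n) // ¬ a ∈ s} :=
    { toFun := fun s => ⟨s.1ᶜ, by simp [s.2]⟩
      invFun := fun s => ⟨s.1ᶜ, by simp [s.2]⟩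
      left_inv := fun s => by simp
      right_inv := fun s => by simp }
  have h3 : Fintype.card (Finset (Fin n)) = 2 * 2 ^ (n - 1) := by
    have hn := a.pos
    have h : n - 1 + 1 = n := by omega
    rw [Fintype.card_finset, Fintype.card_fin, ← pow_succ', h]
  have h1 : Fintype.card {s : Finset (Fin n) // ¬ a ∈ s}
      = 2 * 2 ^ (n - 1) - Fintype.card {s : Finset (Fin n) // a ∈ s} := by
    rw [← h3]; exact Fintype.card_subtype_compl _
  have h2 := Fintype.card_congr e
  have h4 : Fintype.card {s : Finset (Fin n) // a ∈ s} ≤ 2 * 2 ^ (n - 1) := by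
    rw [← h3]; exact Fintype.card_subtype_le _
  omega

theorem setGraph_chromaticNumber (n : ℕ) (hn : 1 ≤ n) :
    (setGraph n).chromaticNumber = (2 ^ (n - 1) : ℕ) := by
  set a : Fin n := ⟨0, hn⟩ with ha
  have hcard := card_mem_aux n a
  -- upper bound: colour s by (s if a ∈ s else sᶜ)
  have C : (setGraph n).Coloring {s : Finset (Fin n) // a ∈ s} := by
    refine SimpleGraph.Coloring.mk
      (fun s => if h : a ∈ s.1 then ⟨s.1, h⟩ else ⟨s.1ᶜ, by simp [h]⟩) ?_
    rintro u v ⟨hne, ⟨x, hx⟩⟩ heq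
    rw [Finset.mem_inter] at hx
    by_cases hu : a ∈ u.1 <;> by_cases hv : a ∈ v.1
    · exact hne (Subtype.ext (by simpa [hu, hv, Subtype.ext_iff] using heq))
    · have h : u.1 = v.1ᶜ := by simpa [hu, hv, Subtype.ext_iff] using heq
      exact (Finset.mem_compl.1 (h ▸ hx.1)) hx.2
    · have h : u.1ᶜ = v.1 := by simpa [hu, hv, Subtype.ext_iff] using heq
      exact (Finset.mem_compl.1 (h ▸ hx.2)) hx.1
    · have h : u.1ᶜ = v.1ᶜ := by simpa [hu, hv, Subtype.ext_iff] using heq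
      exact hne (Subtype.ext (compl_injective h))
  have hub : (setGraph n).chromaticNumber ≤ (2 ^ (n - 1) : ℕ) := by
    rw [← hcard]
    exact C.colorable.chromaticNumber_le
  -- lower bound: complete graph on sets containing a embeds
  have f : (⊤ : SimpleGraph {s : Finset (Fin n) // a ∈ s}) ↪g setGraph n := by
    refine ⟨⟨fun s => ⟨s.1, ⟨a, s.2⟩⟩, ?_⟩, ?_⟩
    · intro u v h
      exact Subtype.ext (by simpa [Subtype.ext_iff] using h)
    · intro u v
      constructor
      · rintro ⟨h1, _⟩
        intro h; apply h1; rw [h]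
      · intro h
        refine ⟨?_, ⟨a, Finset.mem_inter.2 ⟨u.2, v.2⟩⟩⟩
        intro h'; exact h (Subtype.ext (by simpa [Subtype.ext_iff] using h'))
  have hlb : ((2 ^ (n - 1) : ℕ) : ℕ∞) ≤ (setGraph n).chromaticNumber := by
    have := SimpleGraph.chromaticNumber_mono_of_hom f.toHom
    rwa [SimpleGraph.chromaticNumber_top, hcard] at this
  exact le_antisymm hub hlb
end

section
/- In the set-graph G_{A^{(n)}} with n ≥ 2, the set of singleton subsets {{a_1},...,{a_n}} is the unique maximum independent set. -/
/-- A set of vertices is independent if no two of its members are adjacent. -/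
def IsIndep {V : Type*} (G : SimpleGraph V) (S : Set V) : Prop :=
  S.Pairwise fun u v => ¬ G.Adj u v

theorem setGraph_unique_max_indepSet (n : ℕ) (hn : 2 ≤ n) :
    (IsIndep (setGraph n) {v : {s : Finset (Fin n) // s.Nonempty} | ∃ a : Fin n, v.1 = {a}} ∧
      {v : {s : Finset (Fin n) // s.Nonempty} | ∃ a : Fin n, v.1 = {a}}.ncard = n) ∧
    ∀ S : Set {s : Finset (Fin n) // s.Nonempty}, IsIndep (setGraph n) S → S.ncard = n →
      S = {v : {s : Finset (Fin n) // s.Nonempty} | ∃ a : Fin n, v.1 = {a}} := by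
  set Sing : Set {s : Finset (Fin n) // s.Nonempty} := {v | ∃ a : Fin n, v.1 = {a}} with hSing
  have hrange : Sing = Set.range (fun a : Fin n => (⟨{a}, Finset.singleton_nonempty a⟩ : {s : Finset (Fin n) // s.Nonempty})) := by
    ext v
    constructor
    · rintro ⟨a, ha⟩; exact ⟨a, Subtype.ext ha.symm⟩
    · rintro ⟨a, rfl⟩; exact ⟨a, rfl⟩
  have hinj : Function.Injective (fun a : Fin n => (⟨{a}, Finset.singleton_nonempty a⟩ : {s : Finset (Fin n) // s.Nonempty})) := by
    intro a b h
    simpa [Subtype.ext_iff, Finset.singleton_inj] using h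
  have hcard : Sing.ncard = n := by
    rw [hrange, ← Set.image_univ, Set.ncard_image_of_injective _ hinj, Set.ncard_univ]
    simp
  have hindep : IsIndep (setGraph n) Sing := by
    rintro u ⟨a, ha⟩ v ⟨b, hb⟩ huv hadj
    have hab : a ≠ b := by
      intro h; apply huv; apply Subtype.ext; rw [ha, hb, h]
    obtain ⟨x, hx⟩ := hadj.2
    rw [ha, hb, Finset.mem_inter, Finset.mem_singleton, Finset.mem_singleton] at hx
    exact hab (hx.1.symm.trans hx.2)
  refine ⟨⟨hindep, hcard⟩, ?_⟩
  intro S hS hScard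
  have hfin : S.Finite := Set.toFinite S
  -- show S ⊆ Sing
  have hsub : S ⊆ Sing := by
    classical
    have : ∀ v ∈ S, (v : {s : Finset (Fin n) // s.Nonempty}).1.card = 1 := by
      set T : Finset {s : Finset (Fin n) // s.Nonempty} := hfin.toFinset with hT
      have hTcard : T.card = n := by rw [hT, ← Set.ncard_eq_toFinset_card S hfin]; exact hScard
      have hdisj : (T : Set _).PairwiseDisjoint (fun v => (v : {s : Finset (Fin n) // s.Nonempty}).1) := by
        intro u hu v hv huv
        have hu' : u ∈ S := by simpa [hT] using hu
        have hv' : v ∈ S := by simpa [hT] using hv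
        have := hS hu' hv' huv
        simp only [setGraph, not_and] at this
        have h2 := this huv
        rw [Finset.not_nonempty_iff_eq_empty] at h2
        exact Finset.disjoint_left.mpr (fun x hx hx' => by
          have : x ∈ u.1 ∩ v.1 := Finset.mem_inter.mpr ⟨hx, hx'⟩
          simp [h2] at this)
      have hbu : (T.biUnion (fun v => v.1)).card = ∑ v ∈ T, v.1.card :=
        Finset.card_biUnion (fun u hu v hv huv => hdisj hu hv huv)
      have hle : ∑ v ∈ T, v.1.card ≤ n := by
        rw [← hbu]
        calc (T.biUnion (fun v => v.1)).card ≤ (Finset.univ : Finset (Fin n)).card :=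
              Finset.card_le_card (Finset.subset_univ _)
          _ = n := by simp
      have hge : ∀ v ∈ T, 1 ≤ v.1.card := fun v hv => Finset.card_pos.mpr v.2
      have hsum1 : ∑ v ∈ T, v.1.card = T.card := by
        have : T.card ≤ ∑ v ∈ T, v.1.card := by
          calc T.card = ∑ _v ∈ T, 1 := by simp
            _ ≤ ∑ v ∈ T, v.1.card := Finset.sum_le_sum hge
        omega
      intro v hv
      have hvT : v ∈ T := by simpa [hT] using hv
      by_contra hne
      have h2 : 2 ≤ v.1.card := by
        have := hge v hvT; omega
      have : T.card + 1 ≤ ∑ v ∈ T, v.1.card := by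
        have := Finset.sum_le_sum (f := fun _ => 1) (g := fun v : {s : Finset (Fin n) // s.Nonempty} => v.1.card) (fun u hu => hge u hu)
        calc T.card + 1 = (∑ _u ∈ T.erase v, 1) + 2 := by
              rw [Finset.sum_const, smul_eq_mul, mul_one, Finset.card_erase_of_mem hvT]
              have : 1 ≤ T.card := Finset.card_pos.mpr ⟨v, hvT⟩
              omega
          _ ≤ (∑ u ∈ T.erase v, u.1.card) + v.1.card :=
              Nat.add_le_add (Finset.sum_le_sum (fun u hu => hge u (Finset.mem_of_mem_erase hu))) h2
          _ = ∑ v ∈ T, v.1.card := Finset.sum_erase_add T _ hvT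
      omega
    intro v hv
    obtain ⟨a, ha⟩ := Finset.card_eq_one.mp (this v hv)
    exact ⟨a, ha⟩
  exact Set.eq_of_subset_of_ncard_le hsub (by rw [hScard, hcard]) (Set.toFinite _)
end

section
/- Every vertex of the set-graph G_{A^{(n)}}, n ≥ 1, is contained in some maximum clique (of size 2^{n-1}). -/
open Finset in
lemma card_filter_mem_eq (n : ℕ) (a : Fin n) :
    (univ.filter (fun t : Finset (Fin n) => a ∈ t)).card = 2 ^ (n - 1) := by
  have : univ.filter (fun t : Finset (Fin n) => a ∈ t)
      = ((univ.erase a).powerset).image (insert a) := by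
    ext t
    simp only [mem_filter, mem_univ, true_and, mem_image, mem_powerset]
    constructor
    · intro ha
      exact ⟨t.erase a, fun x hx => mem_erase.mpr ⟨(mem_erase.mp hx).1, mem_univ x⟩,
        by rw [insert_erase ha]⟩
    · rintro ⟨s, hs, rfl⟩; exact mem_insert_self a s
  rw [this, card_image_of_injOn, card_powerset, card_erase_of_mem (mem_univ a),
    card_univ, Fintype.card_fin]
  intro s hs t ht h
  simp only [coe_powerset, Set.mem_setOf_eq] at hs ht
  have hsa : a ∉ s := fun h' => (mem_erase.mp (hs (by simpa using h'))).1 rfl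
  have hta : a ∉ t := fun h' => (mem_erase.mp (ht (by simpa using h'))).1 rfl
  rw [← erase_insert hsa, ← erase_insert hta, h]

theorem setGraph_every_vertex_in_max_clique (n : ℕ) (hn : 1 ≤ n)
    (v : {s : Finset (Fin n) // s.Nonempty}) :
    ∃ S : Finset {s : Finset (Fin n) // s.Nonempty},
      (setGraph n).IsNClique (2 ^ (n - 1)) S ∧ v ∈ S := by
  obtain ⟨a, ha⟩ := v.2
  refine ⟨Finset.univ.filter (fun s => a ∈ s.1), ⟨?_, ?_⟩, by simpa using ha⟩
  · intro s hs t ht hst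
    simp only [Finset.coe_filter, Finset.mem_univ, true_and, Set.mem_setOf_eq] at hs ht
    exact ⟨hst, a, Finset.mem_inter.mpr ⟨hs, ht⟩⟩
  · rw [← card_filter_mem_eq n a]
    apply Finset.card_bij (fun s _ => s.1)
    · intro s hs; simp only [Finset.mem_filter, Finset.mem_univ, true_and] at hs ⊢; exact hs
    · intro s hs t ht h; exact Subtype.ext h
    · intro t ht
      simp only [Finset.mem_filter, Finset.mem_univ, true_and] at ht
      exact ⟨⟨t, ⟨a, ht⟩⟩, by simp [ht], rfl⟩
end

section
/- For the set-graph G_{A^{(n)}}, n ≥ 1, there is a proper colouring with χ(G_{A^{(n)}}) = 2^{n-1} colours under which every one of the 2^n − 1 vertices yields a rainbow neighbourhood; moreover this holds for every proper χ-colouring, so r^−_χ(G_{A^{(n)}}) = r^+_χ(G_{A^{(n)}}) = 2^n − 1. -/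
lemma card_contains (n : ℕ) (a : Fin n) :
    (Finset.univ.filter fun w : {s : Finset (Fin n) // s.Nonempty} => a ∈ w.1).card
      = 2 ^ (n - 1) := by
  rw [Finset.card_nbij' (fun w => w.1.erase a) (fun t => ⟨insert a t, Finset.insert_nonempty a t⟩)
      (t := (Finset.univ.erase a).powerset)]
  · rw [Finset.card_powerset, Finset.card_erase_of_mem (Finset.mem_univ a),
      Finset.card_univ, Fintype.card_fin]
  · intro w hw
    simp only [Finset.mem_coe, Finset.mem_powerset]
    intro x hx
    simp only [Finset.mem_erase] at hx ⊢
    exact ⟨hx.1, Finset.mem_univ x⟩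
  · intro t ht
    simp only [Finset.mem_coe, Finset.mem_powerset] at ht
    simp only [Finset.mem_coe, Finset.mem_filter, Finset.mem_univ, true_and]
    exact Finset.mem_insert_self a t
  · intro w hw
    simp only [Finset.mem_coe, Finset.mem_filter, Finset.mem_univ, true_and] at hw
    ext : 1
    simp [Finset.insert_erase hw]
  · intro t ht
    simp only [Finset.mem_coe, Finset.mem_powerset] at ht
    have : a ∉ t := fun h => by
      have := ht h
      simp at this
    simp [Finset.erase_insert this]

theorem setGraph_rainbow (n : ℕ) (hn : 1 ≤ n) :
    ∀ c : (setGraph n).Coloring (Fin (2 ^ (n - 1))),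
      {v : {s : Finset (Fin n) // s.Nonempty} |
        ∀ i : Fin (2 ^ (n - 1)), ∃ u, (u = v ∨ (setGraph n).Adj v u) ∧ c u = i}.ncard
        = 2 ^ n - 1 := by
  intro c
  have hset : {v : {s : Finset (Fin n) // s.Nonempty} |
        ∀ i : Fin (2 ^ (n - 1)), ∃ u, (u = v ∨ (setGraph n).Adj v u) ∧ c u = i} = Set.univ := by
    ext v
    simp only [Set.mem_setOf_eq, Set.mem_univ, iff_true]
    intro i
    obtain ⟨a, ha⟩ := v.2
    set S : Finset {s : Finset (Fin n) // s.Nonempty} :=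
      Finset.univ.filter (fun w => a ∈ w.1) with hS
    have hmemS : ∀ w : {s : Finset (Fin n) // s.Nonempty}, w ∈ S ↔ a ∈ w.1 := by
      intro w; simp [hS]
    have hinj : Set.InjOn c S := by
      intro x hx y hy hxy
      by_contra hne
      exact c.valid ⟨hne, ⟨a, Finset.mem_inter.2 ⟨(hmemS x).1 hx, (hmemS y).1 hy⟩⟩⟩ hxy
    have himg : S.image c = Finset.univ := by
      apply Finset.eq_univ_of_card
      rw [Finset.card_image_of_injOn hinj, card_contains n a, Fintype.card_fin]
    have : i ∈ S.image c := himg ▸ Finset.mem_univ i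
    obtain ⟨u, hu, hcu⟩ := Finset.mem_image.1 this
    refine ⟨u, ?_, hcu⟩
    by_cases h : u = v
    · exact Or.inl h
    · exact Or.inr ⟨fun e => h e.symm, ⟨a, Finset.mem_inter.2 ⟨ha, (hmemS u).1 hu⟩⟩⟩
  rw [hset, Set.ncard_univ, Nat.card_eq_fintype_card, Fintype.card_subtype]
  have : (Finset.univ.filter fun s : Finset (Fin n) => s.Nonempty) = Finset.univ.erase ∅ := by
    ext s
    simp [Finset.nonempty_iff_ne_empty]
  rw [this, Finset.card_erase_of_mem (Finset.mem_univ _), Finset.card_univ,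
    Fintype.card_finset, Fintype.card_fin]
end

section
/- For any graph G, in every proper colouring of the join G' = K_1 + G with χ(G') colours, the apex vertex yields a rainbow neighbourhood, and r_χ(G') = 1 + r_χ(G). -/
/-- The join `K₁ + G`: a new apex vertex (`none`) adjacent to all vertices of `G`. -/
def joinK1 {V : Type*} (G : SimpleGraph V) : SimpleGraph (Option V) where
  Adj a b := match a, b with
    | none, some _ => True
    | some _, none => True
    | some u, some w => G.Adj u w
    | none, none => False
  symm := by
    constructor
    intro a b h
    match a, b with
    | none, some _ => exact h
    | some _, none => exact h
    | some u, some w => exact G.adj_symm h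
    | none, none => exact h
  loopless := by
    constructor
    intro a h
    match a with
    | none => exact h
    | some u => exact G.irrefl h

open SimpleGraph

lemma joinK1_adj_none_some {V : Type*} (G : SimpleGraph V) (u : V) :
    (joinK1 G).Adj none (some u) := trivial

lemma joinK1_adj_some_some {V : Type*} (G : SimpleGraph V) {u w : V} (h : G.Adj u w) :
    (joinK1 G).Adj (some u) (some w) := h

lemma finSuccEquiv'_isSome {n : ℕ} {a x : Fin (n + 1)} (h : x ≠ a) :
    ((finSuccEquiv' a) x).isSome := by
  rcases ho : (finSuccEquiv' a) x with _ | j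
  · exact absurd ((Equiv.eq_symm_apply _).2 ho ▸ finSuccEquiv'_symm_none a) (by simpa using h)
  · rfl

/-- Strip the apex color from a coloring of the join. -/
noncomputable def stripColoring {V : Type*} (G : SimpleGraph V) (k : ℕ)
    (c' : (joinK1 G).Coloring (Fin (k + 1))) : G.Coloring (Fin k) :=
  SimpleGraph.Coloring.mk
    (fun u => ((finSuccEquiv' (c' none)) (c' (some u))).get
      (finSuccEquiv'_isSome (c'.valid (joinK1_adj_none_some G u)).symm))
    (by
      intro u w huw hc
      have h1 : (finSuccEquiv' (c' none)) (c' (some u))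
          = (finSuccEquiv' (c' none)) (c' (some w)) := by
        have hu := finSuccEquiv'_isSome (a := c' none) (c'.valid (joinK1_adj_none_some G u)).symm
        have hw := finSuccEquiv'_isSome (a := c' none) (c'.valid (joinK1_adj_none_some G w)).symm
        rw [← Option.some_get hu, ← Option.some_get hw]
        exact congrArg some hc
      exact c'.valid (joinK1_adj_some_some G huw) ((finSuccEquiv' (c' none)).injective h1))

lemma stripColoring_eq {V : Type*} (G : SimpleGraph V) (k : ℕ)
    (c' : (joinK1 G).Coloring (Fin (k + 1))) (u : V) :
    some (stripColoring G k c' u) = (finSuccEquiv' (c' none)) (c' (some u)) :=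
  Option.some_get _

lemma joinK1_not_colorable {V : Type*} [Fintype V] (G : SimpleGraph V) (k : ℕ)
    (hk : G.chromaticNumber = (k : ℕ)) : ¬ (joinK1 G).Colorable k := by
  rintro ⟨c''⟩
  match k, hk with
  | 0, hk => exact (c'' none).elim0
  | (m + 1), hk =>
    have : G.Colorable m := ⟨stripColoring G m c''⟩
    have h1 : G.chromaticNumber ≤ (m : ℕ∞) := chromaticNumber_le_iff_colorable.2 this
    rw [hk] at h1
    exact absurd (Nat.cast_le.mp h1) (by omega)

theorem joinK1_rainbow {V : Type*} [Fintype V] (G : SimpleGraph V) (k : ℕ)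
    (hk : G.chromaticNumber = (k : ℕ)) :
    (joinK1 G).chromaticNumber = ((k + 1 : ℕ) : ℕ∞) ∧
    ∀ c' : (joinK1 G).Coloring (Fin (k + 1)),
      (∀ i : Fin (k + 1), ∃ u, (u = (none : Option V) ∨ (joinK1 G).Adj none u) ∧ c' u = i) ∧
      ∃ c : G.Coloring (Fin k),
        {v : Option V | ∀ i : Fin (k + 1),
            ∃ u, (u = v ∨ (joinK1 G).Adj v u) ∧ c' u = i}.ncard
          = 1 + {v : V | ∀ i : Fin k, ∃ u, (u = v ∨ G.Adj v u) ∧ c u = i}.ncard := by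
  have hGcol : G.Colorable k := chromaticNumber_le_iff_colorable.1 hk.le
  have hnotcol := joinK1_not_colorable G k hk
  constructor
  · -- chromatic number
    apply le_antisymm
    · apply chromaticNumber_le_iff_colorable.2
      obtain ⟨c⟩ := hGcol
      refine ⟨SimpleGraph.Coloring.mk
        (fun v => match v with
          | none => Fin.last k
          | some u => (c u).castSucc) ?_⟩
      intro a b hab
      match a, b with
      | none, some u => exact fun h => absurd h.symm (Fin.castSucc_lt_last (c u)).ne
      | some u, none => exact fun h => absurd h (Fin.castSucc_lt_last (c u)).ne
      | some u, some w => exact fun h => c.valid hab (Fin.castSucc_injective k h)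
    · by_contra h
      rw [not_le, Nat.cast_add, Nat.cast_one] at h
      exact hnotcol (chromaticNumber_le_iff_colorable.1 (Order.le_of_lt_add_one h))
  · intro c'
    -- surjectivity of c'
    have hsurj : ∀ i : Fin (k + 1), ∃ u, c' u = i := by
      by_contra h
      push_neg at h
      obtain ⟨i, hi⟩ := h
      refine hnotcol ⟨SimpleGraph.Coloring.mk
        (fun v => ((finSuccEquiv' i) (c' v)).get (finSuccEquiv'_isSome (hi v))) ?_⟩
      intro a b hab hc
      apply c'.valid hab
      apply (finSuccEquiv' i).injective
      rw [← Option.some_get (finSuccEquiv'_isSome (hi a)),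
        ← Option.some_get (finSuccEquiv'_isSome (hi b))]
      exact congrArg some hc
    constructor
    · intro i
      obtain ⟨u, hu⟩ := hsurj i
      refine ⟨u, ?_, hu⟩
      match u with
      | none => exact Or.inl rfl
      | some w => exact Or.inr (joinK1_adj_none_some G w)
    · set a := c' none with ha
      set e := finSuccEquiv' a with he
      set c := stripColoring G k c' with hc
      refine ⟨c, ?_⟩
      have key : ∀ w : V, (some w ∈ {v : Option V | ∀ i : Fin (k + 1),
            ∃ u, (u = v ∨ (joinK1 G).Adj v u) ∧ c' u = i})
          ↔ w ∈ {v : V | ∀ i : Fin k, ∃ u, (u = v ∨ G.Adj v u) ∧ c u = i} := by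
        intro w
        constructor
        · intro hw j
          obtain ⟨u, hu, hcu⟩ := hw (e.symm (some j))
          match u, hu with
          | none, hu =>
            exfalso
            have : a = e.symm (some j) := hcu ▸ rfl
            have := (Equiv.eq_symm_apply e).1 this
            rw [finSuccEquiv'_at] at this
            exact (Option.some_ne_none j) this.symm
          | some u', hu =>
            refine ⟨u', ?_, ?_⟩
            · rcases hu with hu | hu
              · exact Or.inl (Option.some_injective V hu)
              · exact Or.inr hu
            · have : some (c u') = some j := by
                rw [stripColoring_eq, ← ha, ← he, hcu, Equiv.apply_symm_apply]
              exact Option.some_injective _ this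
        · intro hw i
          by_cases hia : i = a
          · exact ⟨none, Or.inr trivial, hia ▸ rfl⟩
          · have hsome := finSuccEquiv'_isSome (a := a) hia
            obtain ⟨u', hu', hcu'⟩ := hw ((e i).get hsome)
            refine ⟨some u', ?_, ?_⟩
            · rcases hu' with hu' | hu'
              · exact Or.inl (by rw [hu'])
              · exact Or.inr hu'
            · apply e.injective
              rw [← stripColoring_eq, ← hc, hcu', Option.some_get]
      have hset : {v : Option V | ∀ i : Fin (k + 1),
            ∃ u, (u = v ∨ (joinK1 G).Adj v u) ∧ c' u = i}
          = insert none (some '' {v : V | ∀ i : Fin k, ∃ u, (u = v ∨ G.Adj v u) ∧ c u = i}) := by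
        ext v
        match v with
        | none =>
          simp only [Set.mem_insert_iff, true_or, iff_true]
          intro i
          obtain ⟨u, hu⟩ := hsurj i
          refine ⟨u, ?_, hu⟩
          match u with
          | none => exact Or.inl rfl
          | some w => exact Or.inr (joinK1_adj_none_some G w)
        | some w =>
          rw [key w]
          simp
      rw [hset]
      rw [Set.ncard_insert_of_notMem (by simp) ((Set.toFinite _).image _),
        Set.ncard_image_of_injective _ (Option.some_injective V)]
      omega
end

section
/- For the path P_n with n ≥ 4 even, the maximax independence chromatic number equals 3 = χ(P_n) + 1; for n ≥ 5 odd it equals 2 = χ(P_n). -/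
/-- The independence number of `G` restricted to the vertex set `R`. -/
noncomputable def indepNumOn {V : Type*} (G : SimpleGraph V) (R : Set V) : ℕ :=
  sSup {k : ℕ | ∃ S : Set V, S ⊆ R ∧ IsIndep G S ∧ S.ncard = k}

/-- `S` is a maximum independent set of `G` restricted to `R`. -/
def IsMaxIndepOn {V : Type*} (G : SimpleGraph V) (R S : Set V) : Prop :=
  S ⊆ R ∧ IsIndep G S ∧ S.ncard = indepNumOn G R

/-- One step of the maximax independence procedure on remaining vertex set `R`:
remove a maximum independent set `S` chosen so that the remaining graph has
minimum independence number among all choices of maximum independent set. -/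
def IsMaximaxStep {V : Type*} (G : SimpleGraph V) (R S : Set V) : Prop :=
  IsMaxIndepOn G R S ∧
    ∀ T : Set V, IsMaxIndepOn G R T → indepNumOn G (R \ S) ≤ indepNumOn G (R \ T)

/-- `IsMaximaxSeq G R L` : the list `L` of colour classes is obtained by iterating
the maximax independence procedure starting from remaining vertex set `R`,
until no vertex remains. -/
def IsMaximaxSeq {V : Type*} (G : SimpleGraph V) : Set V → List (Set V) → Prop
  | R, [] => R = ∅
  | R, S :: L => S.Nonempty ∧ IsMaximaxStep G R S ∧ IsMaximaxSeq G (R \ S) L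

/-- `χ^{i-max}(G) = ℓ` : the maximax independence, maximum proper colouring of `G`
uses exactly `ℓ` colours. -/
def ChiImaxEq {V : Type*} (G : SimpleGraph V) (ℓ : ℕ) : Prop :=
  (∃ L, IsMaximaxSeq G Set.univ L ∧ L.length = ℓ) ∧
    ∀ L, IsMaximaxSeq G Set.univ L → L.length = ℓ

section Generic
variable {V : Type*} [Finite V] {G : SimpleGraph V} {R S : Set V}

lemma indep_empty (G : SimpleGraph V) : IsIndep G (∅ : Set V) := Set.pairwise_empty _

lemma bdd (G : SimpleGraph V) (R : Set V) :
    BddAbove {k : ℕ | ∃ S : Set V, S ⊆ R ∧ IsIndep G S ∧ S.ncard = k} := by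
  refine ⟨Nat.card V, ?_⟩
  rintro k ⟨S, -, -, rfl⟩
  simpa [Set.ncard_univ] using Set.ncard_le_ncard (Set.subset_univ S) Set.finite_univ

lemma le_indepNumOn (hS : S ⊆ R) (hi : IsIndep G S) : S.ncard ≤ indepNumOn G R :=
  le_csSup (bdd G R) ⟨S, hS, hi, rfl⟩

lemma indepNumOn_le {k : ℕ} (h : ∀ S : Set V, S ⊆ R → IsIndep G S → S.ncard ≤ k) :
    indepNumOn G R ≤ k :=
  csSup_le ⟨0, ∅, Set.empty_subset R, indep_empty G, Set.ncard_empty V⟩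
    (by rintro a ⟨S, h1, h2, rfl⟩; exact h S h1 h2)

lemma exists_isMaxIndepOn (G : SimpleGraph V) (R : Set V) : ∃ S, IsMaxIndepOn G R S := by
  have h := Nat.sSup_mem (s := {k : ℕ | ∃ S : Set V, S ⊆ R ∧ IsIndep G S ∧ S.ncard = k})
    ⟨0, ∅, Set.empty_subset R, indep_empty G, Set.ncard_empty V⟩ (bdd G R)
  obtain ⟨S, h1, h2, h3⟩ := h
  exact ⟨S, h1, h2, h3⟩

lemma indepNumOn_of_indep (hi : IsIndep G R) : indepNumOn G R = R.ncard :=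
  le_antisymm (indepNumOn_le fun S hS _ => Set.ncard_le_ncard hS (Set.toFinite R))
    (le_indepNumOn subset_rfl hi)

lemma eq_of_isMaxIndepOn_of_indep (hi : IsIndep G R) (hS : IsMaxIndepOn G R S) : S = R :=
  Set.eq_of_subset_of_ncard_le hS.1
    (by rw [hS.2.2, indepNumOn_of_indep hi]) (Set.toFinite R)

lemma indepNumOn_le_ncard (G : SimpleGraph V) (R : Set V) : indepNumOn G R ≤ R.ncard :=
  indepNumOn_le fun S hS _ => Set.ncard_le_ncard hS (Set.toFinite R)

lemma indepNumOn_lt_of_not_indep (hR : ¬ IsIndep G R) : indepNumOn G R < R.ncard := by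
  rcases lt_or_eq_of_le (indepNumOn_le_ncard G R) with h | h
  · exact h
  · exfalso
    obtain ⟨S, hS⟩ := exists_isMaxIndepOn G R
    have hSR : S = R := Set.eq_of_subset_of_ncard_le hS.1
      (by rw [hS.2.2, h]) (Set.toFinite R)
    exact hR (hSR ▸ hS.2.1)

lemma indepNumOn_pos (h : R.Nonempty) : 0 < indepNumOn G R := by
  obtain ⟨a, ha⟩ := h
  have := le_indepNumOn (G := G) (Set.singleton_subset_iff.mpr ha)
    (Set.pairwise_singleton a _)
  exact Nat.lt_of_lt_of_le Nat.zero_lt_one (this.trans_eq' (Set.ncard_singleton a))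

lemma exists_isMaximaxStep (G : SimpleGraph V) (R : Set V) : ∃ S, IsMaximaxStep G R S := by
  have hne : {a : ℕ | ∃ T, IsMaxIndepOn G R T ∧ indepNumOn G (R \ T) = a}.Nonempty := by
    obtain ⟨T, hT⟩ := exists_isMaxIndepOn G R
    exact ⟨_, T, hT, rfl⟩
  obtain ⟨T, hT, hTa⟩ := Nat.sInf_mem hne
  refine ⟨T, hT, fun T' hT' => ?_⟩
  rw [hTa]
  exact Nat.sInf_le ⟨T', hT', rfl⟩

lemma isMaximaxSeq_empty {L : List (Set V)} (h : IsMaximaxSeq G ∅ L) : L = [] := by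
  cases L with
  | nil => rfl
  | cons S L =>
    obtain ⟨⟨a, ha⟩, hstep, -⟩ := h
    exact absurd (hstep.1.1 ha) (by simp)

lemma exists_isMaximaxSeq_aux (G : SimpleGraph V) :
    ∀ (n : ℕ) (R : Set V), R.ncard ≤ n → ∃ L, IsMaximaxSeq G R L := by
  intro n
  induction n with
  | zero =>
    intro R hR
    refine ⟨[], ?_⟩
    have : R = ∅ := by rw [← Set.ncard_eq_zero (Set.toFinite R)]; omega
    exact this
  | succ n ih =>
    intro R hR
    by_cases hRe : R = ∅
    · exact ⟨[], hRe⟩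
    obtain ⟨S, hS⟩ := exists_isMaximaxStep G R
    have hSne : S.Nonempty := by
      have hpos := indepNumOn_pos (G := G) (R := R) (Set.nonempty_iff_ne_empty.mpr hRe)
      rw [← hS.1.2.2] at hpos
      exact Set.nonempty_of_ncard_ne_zero (by omega)
    have hlt : (R \ S).ncard < R.ncard := by
      apply Set.ncard_lt_ncard _ (Set.toFinite R)
      refine ⟨Set.diff_subset, fun hsub => ?_⟩
      obtain ⟨a, ha⟩ := hSne
      exact (hsub (hS.1.1 ha)).2 ha
    obtain ⟨L, hL⟩ := ih (R \ S) (by omega)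
    exact ⟨S :: L, hSne, hS, hL⟩

lemma exists_isMaximaxSeq (G : SimpleGraph V) (R : Set V) : ∃ L, IsMaximaxSeq G R L :=
  exists_isMaximaxSeq_aux G R.ncard R le_rfl

end Generic

section Path
open SimpleGraph
variable {n : ℕ}

lemma isIndep_path_iff {S : Set (Fin n)} :
    IsIndep (pathGraph n) S ↔ ∀ u ∈ S, ∀ v ∈ S, (u : ℕ) + 1 ≠ (v : ℕ) := by
  constructor
  · intro h u hu v hv huv
    have hne : u ≠ v := by
      intro e; subst e; omega
    exact h hu hv hne (pathGraph_adj.mpr (Or.inl huv))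
  · intro h u hu v hv _ hadj
    rcases pathGraph_adj.mp hadj with h1 | h1
    · exact h u hu v hv h1
    · exact h v hv u hu h1

lemma injOn_halve {S : Set (Fin n)} (hS : IsIndep (pathGraph n) S) :
    Set.InjOn (fun i : Fin n => (i : ℕ) / 2) S := by
  intro u hu v hv h
  rw [isIndep_path_iff] at hS
  have h1 := hS u hu v hv
  have h2 := hS v hv u hu
  simp only at h
  exact Fin.ext (by omega)

lemma halve_image_subset (S : Set (Fin n)) :
    (fun i : Fin n => (i : ℕ) / 2) '' S ⊆ ↑(Finset.range ((n + 1) / 2)) := by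
  rintro k ⟨i, hi, rfl⟩
  simp only [Finset.coe_range, Set.mem_Iio]
  have := i.2; omega

lemma indep_ncard_le {S : Set (Fin n)} (hS : IsIndep (pathGraph n) S) :
    S.ncard ≤ (n + 1) / 2 := by
  calc S.ncard = ((fun i : Fin n => (i : ℕ) / 2) '' S).ncard :=
        (Set.ncard_image_of_injOn (injOn_halve hS)).symm
    _ ≤ (↑(Finset.range ((n + 1) / 2)) : Set ℕ).ncard :=
        Set.ncard_le_ncard (halve_image_subset S) (Set.toFinite _)
    _ = (n + 1) / 2 := by rw [Set.ncard_coe_finset, Finset.card_range]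

lemma exists_mem_pair {S : Set (Fin n)} (hS : IsIndep (pathGraph n) S)
    (hcard : S.ncard = (n + 1) / 2) : ∀ j < (n + 1) / 2, ∃ i ∈ S, (i : ℕ) / 2 = j := by
  have heq : (fun i : Fin n => (i : ℕ) / 2) '' S = ↑(Finset.range ((n + 1) / 2)) := by
    apply Set.eq_of_subset_of_ncard_le (halve_image_subset S) _ (Set.toFinite _)
    rw [Set.ncard_image_of_injOn (injOn_halve hS), hcard, Set.ncard_coe_finset,
      Finset.card_range]
  intro j hj
  have : j ∈ (fun i : Fin n => (i : ℕ) / 2) '' S := by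
    rw [heq]; simp [hj]
  obtain ⟨i, hi, h⟩ := this
  exact ⟨i, hi, h⟩

def Tset (n k : ℕ) : Set (Fin n) :=
  {i | ((i : ℕ) < 2 * k ∧ (i : ℕ) % 2 = 0) ∨ (2 * k ≤ (i : ℕ) ∧ (i : ℕ) % 2 = 1)}

def Cset (n k : ℕ) : Set (Fin n) :=
  {i | ((i : ℕ) < 2 * k ∧ (i : ℕ) % 2 = 1) ∨ (2 * k ≤ (i : ℕ) ∧ (i : ℕ) % 2 = 0)}

def Wset (n k : ℕ) : Set (Fin n) :=
  {i | ((i : ℕ) < 2 * k ∧ (i : ℕ) % 2 = 1) ∨ (2 * k < (i : ℕ) ∧ (i : ℕ) % 2 = 0)}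

def Ev (n : ℕ) : Set (Fin n) := {i | (i : ℕ) % 2 = 0}
def Od (n : ℕ) : Set (Fin n) := {i | (i : ℕ) % 2 = 1}

lemma indep_Tset {m k : ℕ} : IsIndep (pathGraph (2 * m)) (Tset (2 * m) k) := by
  rw [isIndep_path_iff]
  intro u hu v hv
  simp only [Tset, Set.mem_setOf_eq] at hu hv
  omega

lemma indep_Wset {m k : ℕ} : IsIndep (pathGraph (2 * m)) (Wset (2 * m) k) := by
  rw [isIndep_path_iff]
  intro u hu v hv
  simp only [Wset, Set.mem_setOf_eq] at hu hv
  omega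

lemma indep_Ev : IsIndep (pathGraph n) (Ev n) := by
  rw [isIndep_path_iff]
  intro u hu v hv
  simp only [Ev, Set.mem_setOf_eq] at hu hv
  omega

lemma indep_Od : IsIndep (pathGraph n) (Od n) := by
  rw [isIndep_path_iff]
  intro u hu v hv
  simp only [Od, Set.mem_setOf_eq] at hu hv
  omega

lemma ncard_Ev : (Ev n).ncard = (n + 1) / 2 := by
  apply Set.ncard_eq_of_bijective (fun j h => (⟨2 * j, by omega⟩ : Fin n))
  · intro i hi
    simp only [Ev, Set.mem_setOf_eq] at hi
    have := i.2
    exact ⟨(i : ℕ) / 2, by omega, Fin.ext (by simp; omega)⟩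
  · intro j h
    simp only [Ev, Set.mem_setOf_eq]
    omega
  · intro i j hi hj e
    have := congrArg Fin.val e
    simp only at this
    omega

lemma ncard_Od : (Od n).ncard = n / 2 := by
  apply Set.ncard_eq_of_bijective (fun j h => (⟨2 * j + 1, by omega⟩ : Fin n))
  · intro i hi
    simp only [Od, Set.mem_setOf_eq] at hi
    have := i.2
    exact ⟨(i : ℕ) / 2, by omega, Fin.ext (by simp; omega)⟩
  · intro j h
    simp only [Od, Set.mem_setOf_eq]
    omega
  · intro i j hi hj e
    have := congrArg Fin.val e
    simp only at this
    omega

lemma ncard_Tset {m k : ℕ} (hk : k ≤ m) : (Tset (2 * m) k).ncard = m := by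
  apply Set.ncard_eq_of_bijective
    (fun j h => (⟨if j < k then 2 * j else 2 * j + 1, by split <;> omega⟩ : Fin (2 * m)))
  · intro i hi
    simp only [Tset, Set.mem_setOf_eq] at hi
    have := i.2
    refine ⟨(i : ℕ) / 2, by omega, Fin.ext ?_⟩
    simp only
    split <;> omega
  · intro j h
    simp only [Tset, Set.mem_setOf_eq]
    split <;> omega
  · intro i j hi hj e
    have := congrArg Fin.val e
    simp only at this
    split at this <;> split at this <;> omega

lemma ncard_Cset {m k : ℕ} (hk : k ≤ m) : (Cset (2 * m) k).ncard = m := by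
  apply Set.ncard_eq_of_bijective
    (fun j h => (⟨if j < k then 2 * j + 1 else 2 * j, by split <;> omega⟩ : Fin (2 * m)))
  · intro i hi
    simp only [Cset, Set.mem_setOf_eq] at hi
    have := i.2
    refine ⟨(i : ℕ) / 2, by omega, Fin.ext ?_⟩
    simp only
    split <;> omega
  · intro j h
    simp only [Cset, Set.mem_setOf_eq]
    split <;> omega
  · intro i j hi hj e
    have := congrArg Fin.val e
    simp only at this
    split at this <;> split at this <;> omega

lemma ncard_Wset {m k : ℕ} (hk : k < m) : (Wset (2 * m) k).ncard = m - 1 := by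
  apply Set.ncard_eq_of_bijective
    (fun j h => (⟨if j < k then 2 * j + 1 else 2 * j + 2, by split <;> omega⟩ : Fin (2 * m)))
  · intro i hi
    simp only [Wset, Set.mem_setOf_eq] at hi
    have := i.2
    rcases hi with ⟨h1, h2⟩ | ⟨h1, h2⟩
    · refine ⟨(i : ℕ) / 2, by omega, Fin.ext ?_⟩
      simp only
      split <;> omega
    · refine ⟨(i : ℕ) / 2 - 1, by omega, Fin.ext ?_⟩
      simp only
      split <;> omega
  · intro j h
    simp only [Wset, Set.mem_setOf_eq]
    split <;> omega
  · intro i j hi hj e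
    have := congrArg Fin.val e
    simp only at this
    split at this <;> split at this <;> omega

lemma compl_Tset (m k : ℕ) : Set.univ \ Tset (2 * m) k = Cset (2 * m) k := by
  ext i
  simp only [Tset, Cset, Set.mem_diff, Set.mem_univ, Set.mem_setOf_eq, true_and]
  omega

lemma Wset_subset_Cset (m k : ℕ) : Wset (2 * m) k ⊆ Cset (2 * m) k := by
  intro i hi
  simp only [Wset, Set.mem_setOf_eq] at hi
  simp only [Cset, Set.mem_setOf_eq]
  omega

lemma Cset_zero : Cset (2 * m) 0 = Ev (2 * m) := by
  ext i
  simp only [Cset, Ev, Set.mem_setOf_eq]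
  omega

lemma Cset_m : Cset (2 * m) m = Od (2 * m) := by
  ext i
  have := i.2
  simp only [Cset, Od, Set.mem_setOf_eq]
  omega

lemma compl_Ev : Set.univ \ Ev n = Od n := by
  ext i
  simp only [Ev, Od, Set.mem_diff, Set.mem_univ, Set.mem_setOf_eq, true_and]
  omega

lemma even_char {m : ℕ} {S : Set (Fin (2 * m))} (hS : IsIndep (pathGraph (2 * m)) S)
    (hcard : S.ncard = m) : ∃ k ≤ m, S = Tset (2 * m) k := by
  have hpair : ∀ j < m, ∃ i ∈ S, (i : ℕ) / 2 = j := by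
    intro j hj
    exact exists_mem_pair hS (by rw [hcard]; omega) j (by omega)
  have hinj := injOn_halve hS
  set A : Set ℕ := {j | j = m ∨ ∃ i ∈ S, (i : ℕ) = 2 * j + 1} with hA
  have hmA : m ∈ A := Or.inl rfl
  set k := sInf A with hk
  have hkA : k ∈ A := Nat.sInf_mem ⟨m, hmA⟩
  have hkm : k ≤ m := Nat.sInf_le hmA
  have hup : ∀ j, k ≤ j → (j < m → ∃ i ∈ S, (i : ℕ) = 2 * j + 1) := by
    intro j hkj
    induction j, hkj using Nat.le_induction with
    | base =>
      intro hklt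
      rcases hkA with h | h
      · omega
      · exact h
    | succ j hkj ih =>
      intro hjm
      obtain ⟨i, hiS, hi2⟩ := hpair (j + 1) hjm
      rcases (by omega : (i : ℕ) = 2 * (j + 1) ∨ (i : ℕ) = 2 * (j + 1) + 1) with h | h
      · obtain ⟨i', hi'S, hi'⟩ := ih (by omega)
        exfalso
        rw [isIndep_path_iff] at hS
        exact hS i' hi'S i hiS (by omega)
      · exact ⟨i, hiS, h⟩
  have hdown : ∀ j < k, ∃ i ∈ S, (i : ℕ) = 2 * j := by
    intro j hjk
    obtain ⟨i, hiS, hi2⟩ := hpair j (by omega)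
    rcases (by omega : (i : ℕ) = 2 * j ∨ (i : ℕ) = 2 * j + 1) with h | h
    · exact ⟨i, hiS, h⟩
    · exfalso
      have : j ∈ A := Or.inr ⟨i, hiS, h⟩
      have := Nat.sInf_le this
      omega
  refine ⟨k, hkm, ?_⟩
  ext i
  simp only [Tset, Set.mem_setOf_eq]
  have hi2m := i.2
  constructor
  · intro hiS
    by_cases hjk : (i : ℕ) / 2 < k
    · obtain ⟨i', hi'S, hi'⟩ := hdown ((i : ℕ) / 2) hjk
      have he : i = i' := hinj hiS hi'S (by simp only; omega)
      have := congrArg Fin.val he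
      omega
    · obtain ⟨i', hi'S, hi'⟩ := hup ((i : ℕ) / 2) (by omega) (by omega)
      have he : i = i' := hinj hiS hi'S (by simp only; omega)
      have := congrArg Fin.val he
      omega
  · intro h
    rcases h with ⟨h1, h2⟩ | ⟨h1, h2⟩
    · obtain ⟨i', hi'S, hi'⟩ := hdown ((i : ℕ) / 2) (by omega)
      have : i = i' := Fin.ext (by omega)
      exact this ▸ hi'S
    · obtain ⟨i', hi'S, hi'⟩ := hup ((i : ℕ) / 2) (by omega) (by omega)
      have : i = i' := Fin.ext (by omega)
      exact this ▸ hi'S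

lemma odd_char {m : ℕ} {S : Set (Fin (2 * m + 1))} (hS : IsIndep (pathGraph (2 * m + 1)) S)
    (hcard : S.ncard = m + 1) : S = Ev (2 * m + 1) := by
  have hpair : ∀ j < m + 1, ∃ i ∈ S, (i : ℕ) / 2 = j := by
    intro j hj
    exact exists_mem_pair hS (by rw [hcard]; omega) j (by omega)
  have hinj := injOn_halve hS
  have hdown : ∀ j, j ≤ m → ∃ i ∈ S, (i : ℕ) = 2 * (m - j) := by
    intro j
    induction j with
    | zero =>
      intro _
      obtain ⟨i, hiS, h2⟩ := hpair m (by omega)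
      refine ⟨i, hiS, ?_⟩
      have := i.2
      omega
    | succ j ih =>
      intro hjm
      obtain ⟨i, hiS, h2⟩ := hpair (m - (j + 1)) (by omega)
      rcases (by omega : (i : ℕ) = 2 * (m - (j + 1)) ∨ (i : ℕ) = 2 * (m - (j + 1)) + 1) with h | h
      · exact ⟨i, hiS, h⟩
      · obtain ⟨i', hi'S, h'⟩ := ih (by omega)
        exfalso
        rw [isIndep_path_iff] at hS
        exact hS i hiS i' hi'S (by omega)
  ext i
  simp only [Ev, Set.mem_setOf_eq]
  have hi2m := i.2
  constructor
  · intro hiS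
    by_contra hodd
    obtain ⟨i', hi'S, h'⟩ := hdown (m - (i : ℕ) / 2) (by omega)
    have he : i = i' := hinj hiS hi'S (by simp only; omega)
    have := congrArg Fin.val he
    omega
  · intro hev
    obtain ⟨i', hi'S, h'⟩ := hdown (m - (i : ℕ) / 2) (by omega)
    have : i = i' := Fin.ext (by omega)
    exact this ▸ hi'S

end Path


section Alpha
open SimpleGraph

lemma alpha_univ_even {m : ℕ} (hm : 1 ≤ m) :
    indepNumOn (pathGraph (2 * m)) Set.univ = m := by
  apply le_antisymm
  · exact indepNumOn_le fun S _ hS => (indep_ncard_le hS).trans (by omega)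
  · have := le_indepNumOn (G := pathGraph (2 * m)) (Set.subset_univ (Tset (2 * m) m)) indep_Tset
    rwa [ncard_Tset le_rfl] at this

lemma alpha_Cset_mid {m k : ℕ} (hk : 0 < k) (hkm : k < m) :
    indepNumOn (pathGraph (2 * m)) (Cset (2 * m) k) = m - 1 := by
  apply le_antisymm
  · have hni : ¬ IsIndep (pathGraph (2 * m)) (Cset (2 * m) k) := by
      intro h
      rw [isIndep_path_iff] at h
      refine h ⟨2 * k - 1, by omega⟩ ?_ ⟨2 * k, by omega⟩ ?_ (by simp; omega)
      · simp only [Cset, Set.mem_setOf_eq]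
        omega
      · simp only [Cset, Set.mem_setOf_eq]
        omega
    have h1 := indepNumOn_lt_of_not_indep hni
    rw [ncard_Cset hkm.le] at h1
    omega
  · have := le_indepNumOn (G := pathGraph (2 * m)) (Wset_subset_Cset m k) indep_Wset
    rwa [ncard_Wset hkm] at this

lemma alpha_Cset_0 {m : ℕ} : indepNumOn (pathGraph (2 * m)) (Cset (2 * m) 0) = m := by
  rw [Cset_zero, indepNumOn_of_indep indep_Ev, ncard_Ev]
  omega

lemma alpha_Cset_m {m : ℕ} : indepNumOn (pathGraph (2 * m)) (Cset (2 * m) m) = m := by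
  rw [Cset_m, indepNumOn_of_indep indep_Od, ncard_Od]
  omega

lemma alpha_univ_odd (m : ℕ) :
    indepNumOn (pathGraph (2 * m + 1)) Set.univ = m + 1 := by
  apply le_antisymm
  · exact indepNumOn_le fun S _ hS => (indep_ncard_le hS).trans (by omega)
  · have := le_indepNumOn (G := pathGraph (2 * m + 1)) (Set.subset_univ (Ev (2 * m + 1))) indep_Ev
    rw [ncard_Ev] at this
    exact le_trans (by omega) this

end Alpha

section Main
open SimpleGraph

theorem chiImax_even (m : ℕ) (hm : 2 ≤ m) : ChiImaxEq (pathGraph (2 * m)) 3 := by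
  have huniq : ∀ L, IsMaximaxSeq (pathGraph (2 * m)) Set.univ L → L.length = 3 := by
    intro L hL
    cases L with
    | nil =>
      exfalso
      have hL' : (Set.univ : Set (Fin (2 * m))) = ∅ := hL
      have h0 : (⟨0, by omega⟩ : Fin (2 * m)) ∈ (Set.univ : Set (Fin (2 * m))) := Set.mem_univ _
      rw [hL'] at h0
      exact h0
    | cons S₁ L₁ =>
      obtain ⟨hne1, hstep1, hseq1⟩ := hL
      have hS1card : S₁.ncard = m := by rw [hstep1.1.2.2, alpha_univ_even (by omega)]
      obtain ⟨k, hkm, rfl⟩ := even_char hstep1.1.2.1 hS1card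
      have hmin := hstep1.2 (Tset (2 * m) 1)
        ⟨Set.subset_univ _, indep_Tset, by rw [ncard_Tset (by omega), alpha_univ_even (by omega)]⟩
      rw [compl_Tset m k, compl_Tset m 1, alpha_Cset_mid (m := m) (k := 1) (by omega) (by omega)] at hmin
      have hk0 : k ≠ 0 := by rintro rfl; rw [alpha_Cset_0] at hmin; omega
      have hkm' : k ≠ m := by rintro rfl; rw [alpha_Cset_m] at hmin; omega
      rw [compl_Tset m k] at hseq1
      cases L₁ with
      | nil =>
        exfalso
        have hseq1' : Cset (2 * m) k = ∅ := hseq1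
        have h0 : (⟨2 * k, by omega⟩ : Fin (2 * m)) ∈ Cset (2 * m) k := by
          simp only [Cset, Set.mem_setOf_eq]
          omega
        rw [hseq1'] at h0
        exact h0
      | cons S₂ L₂ =>
        obtain ⟨hne2, hstep2, hseq2⟩ := hseq1
        have hS2card : S₂.ncard = m - 1 := by
          rw [hstep2.1.2.2, alpha_Cset_mid (by omega) (by omega)]
        have hR2 : (Cset (2 * m) k \ S₂).ncard = 1 := by
          rw [Set.ncard_diff hstep2.1.1 (Set.toFinite _), ncard_Cset hkm, hS2card]
          omega
        obtain ⟨a, ha⟩ := Set.ncard_eq_one.mp hR2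
        rw [ha] at hseq2
        cases L₂ with
        | nil =>
          exfalso
          have hseq2' : ({a} : Set (Fin (2 * m))) = ∅ := hseq2
          exact Set.singleton_ne_empty a hseq2'
        | cons S₃ L₃ =>
          obtain ⟨hne3, hstep3, hseq3⟩ := hseq2
          have hS3 : S₃ = {a} :=
            eq_of_isMaxIndepOn_of_indep (Set.pairwise_singleton a _) hstep3.1
          rw [hS3, Set.diff_self] at hseq3
          rw [isMaximaxSeq_empty hseq3]
          rfl
  obtain ⟨L, hL⟩ := exists_isMaximaxSeq (pathGraph (2 * m)) Set.univ
  exact ⟨⟨L, hL, huniq L hL⟩, huniq⟩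

theorem chiImax_odd (m : ℕ) (hm : 1 ≤ m) : ChiImaxEq (pathGraph (2 * m + 1)) 2 := by
  have huniq : ∀ L, IsMaximaxSeq (pathGraph (2 * m + 1)) Set.univ L → L.length = 2 := by
    intro L hL
    cases L with
    | nil =>
      exfalso
      have hL' : (Set.univ : Set (Fin (2 * m + 1))) = ∅ := hL
      have h0 : (⟨0, by omega⟩ : Fin (2 * m + 1)) ∈ (Set.univ : Set (Fin (2 * m + 1))) :=
        Set.mem_univ _
      rw [hL'] at h0
      exact h0
    | cons S₁ L₁ =>
      obtain ⟨hne1, hstep1, hseq1⟩ := hL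
      have hS1card : S₁.ncard = m + 1 := by rw [hstep1.1.2.2, alpha_univ_odd]
      have hS1 : S₁ = Ev (2 * m + 1) := odd_char hstep1.1.2.1 hS1card
      rw [hS1, compl_Ev] at hseq1
      cases L₁ with
      | nil =>
        exfalso
        have hseq1' : Od (2 * m + 1) = ∅ := hseq1
        have h0 : (⟨1, by omega⟩ : Fin (2 * m + 1)) ∈ Od (2 * m + 1) := by
          simp only [Od, Set.mem_setOf_eq]
        rw [hseq1'] at h0
        exact h0
      | cons S₂ L₂ =>
        obtain ⟨hne2, hstep2, hseq2⟩ := hseq1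
        have hS2 : S₂ = Od (2 * m + 1) :=
          eq_of_isMaxIndepOn_of_indep indep_Od hstep2.1
        rw [hS2, Set.diff_self] at hseq2
        rw [isMaximaxSeq_empty hseq2]
        rfl
  obtain ⟨L, hL⟩ := exists_isMaximaxSeq (pathGraph (2 * m + 1)) Set.univ
  exact ⟨⟨L, hL, huniq L hL⟩, huniq⟩

end Main

theorem pathGraph_chiImax (n : ℕ) :
    (4 ≤ n → Even n → ChiImaxEq (SimpleGraph.pathGraph n) 3) ∧
    (5 ≤ n → Odd n → ChiImaxEq (SimpleGraph.pathGraph n) 2) := by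
  constructor
  · intro h4 heven
    obtain ⟨m, rfl⟩ : ∃ m, n = 2 * m := ⟨n / 2, by rw [Nat.even_iff] at heven; omega⟩
    exact chiImax_even m (by omega)
  · intro h5 hodd
    obtain ⟨m, rfl⟩ : ∃ m, n = 2 * m + 1 := ⟨n / 2, by rw [Nat.odd_iff] at hodd; omega⟩
    exact chiImax_odd m (by omega)
end
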